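/- For any two permutations π and σ of [n], the sum over all ordered pairs (x, y) in S(π, σ) of the quantity π^{-1}(y) − π^{-1}(x) equals (1/2)·‖v_π − v_σ‖². -/

import Mathlib

open scoped Classical
open Finset

namespace Mallows

/-- Kendall-tau distance between two permutations of `Fin n`: the number of pairs of
elements whose relative order differs in the two permutations. -/
noncomputable def dKT {n : ℕ} (π σ : Equiv.Perm (Fin n)) : ℕ :=
  (Finset.univ.filter (fun p : Fin n × Fin n =>
    p.1 < p.2 ∧ ¬((π.symm p.1 < π.symm p.2) ↔ (σ.symm p.1 < σ.symm p.2)))).card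

/-- Probability mass function of the Mallows model `M(φ, π₀)`. -/
noncomputable def mallowsPMF {n : ℕ} (φ : ℝ) (π₀ π : Equiv.Perm (Fin n)) : ℝ :=
  φ ^ dKT π π₀ / ∑ σ : Equiv.Perm (Fin n), φ ^ dKT σ π₀

/-- Expectation of `f` under `M(φ, π₀)`. -/
noncomputable def mExp {n : ℕ} (φ : ℝ) (π₀ : Equiv.Perm (Fin n))
    (f : Equiv.Perm (Fin n) → ℝ) : ℝ :=
  ∑ π : Equiv.Perm (Fin n), mallowsPMF φ π₀ π * f π

/-- Probability of the event `A` under `M(φ, π₀)`. -/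
noncomputable def mProb {n : ℕ} (φ : ℝ) (π₀ : Equiv.Perm (Fin n))
    (A : Equiv.Perm (Fin n) → Prop) : ℝ :=
  ∑ π : Equiv.Perm (Fin n), if A π then mallowsPMF φ π₀ π else 0

/-- Total variation distance between two pmfs on permutations of `Fin n`. -/
noncomputable def tvDist {n : ℕ} (p q : Equiv.Perm (Fin n) → ℝ) : ℝ :=
  (∑ π : Equiv.Perm (Fin n), |p π - q π|) / 2

/-- Kullback–Leibler divergence between two pmfs on permutations of `Fin n`. -/
noncomputable def klDiv {n : ℕ} (p q : Equiv.Perm (Fin n) → ℝ) : ℝ :=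
  ∑ π : Equiv.Perm (Fin n), p π * Real.log (p π / q π)

/-- Position vector of a permutation: entry `i` is the position `π⁻¹ i` of element `i`. -/
noncomputable def posVec {n : ℕ} (π : Equiv.Perm (Fin n)) : EuclideanSpace ℝ (Fin n) :=
  WithLp.toLp 2 (fun i => ((π.symm i).1 : ℝ))

/-- Front adjustment vector of `π` with respect to `π̂`: entry `i` counts the elements `j`
with `π̂⁻¹ j < π̂⁻¹ i` and `π⁻¹ j > π⁻¹ i`. -/
noncomputable def leftAdj {n : ℕ} (πh π : Equiv.Perm (Fin n)) : EuclideanSpace ℝ (Fin n) :=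
  WithLp.toLp 2 (fun i => ((Finset.univ.filter (fun j : Fin n =>
    πh.symm j < πh.symm i ∧ π.symm i < π.symm j)).card : ℝ))

/-- Back adjustment vector of `π` with respect to `π̂`: entry `i` counts the elements `j`
with `π̂⁻¹ j > π̂⁻¹ i` and `π⁻¹ j < π⁻¹ i`. -/
noncomputable def rightAdj {n : ℕ} (πh π : Equiv.Perm (Fin n)) : EuclideanSpace ℝ (Fin n) :=
  WithLp.toLp 2 (fun i => ((Finset.univ.filter (fun j : Fin n =>
    πh.symm i < πh.symm j ∧ π.symm j < π.symm i)).card : ℝ))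

lemma card_lt {n : ℕ} (π : Equiv.Perm (Fin n)) (i : Fin n) :
    (univ.filter (fun j => π.symm j < π.symm i)).card = (π.symm i).1 := by
  rw [← Fin.card_Iio (π.symm i)]
  apply Finset.card_bij' (fun j _ => π.symm j) (fun k _ => π k)
  · intro j hj; simp at hj ⊢; exact hj
  · intro k hk; simp at hk ⊢; exact hk
  · intro j hj; simp
  · intro k hk; simp

lemma pos_split {n : ℕ} (π σ : Equiv.Perm (Fin n)) (i : Fin n) :
    (π.symm i).1 =
      (univ.filter (fun j => π.symm j < π.symm i ∧ σ.symm j < σ.symm i)).card +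
      (univ.filter (fun j => π.symm j < π.symm i ∧ σ.symm i < σ.symm j)).card := by
  rw [← card_lt π i]
  have h := Finset.card_filter_add_card_filter_not
    (s := univ.filter (fun j => π.symm j < π.symm i))
    (p := fun j => σ.symm j < σ.symm i)
  rw [Finset.filter_filter, Finset.filter_filter] at h
  have e2 : (univ.filter (fun j => π.symm j < π.symm i ∧ ¬ σ.symm j < σ.symm i))
      = univ.filter (fun j => π.symm j < π.symm i ∧ σ.symm i < σ.symm j) := by
    ext j
    simp only [Finset.mem_filter, Finset.mem_univ, true_and, not_lt]
    constructor
    · rintro ⟨h1, h2⟩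
      refine ⟨h1, lt_of_le_of_ne h2 ?_⟩
      intro he
      exact absurd (σ.symm.injective he) (by rintro rfl; exact lt_irrefl _ h1)
    · rintro ⟨h1, h2⟩; exact ⟨h1, le_of_lt h2⟩
  rw [e2] at h
  rw [← h]

/-- Combinatorial identity. The sum over ordered pairs `(x, y) ∈ S(π, σ)`
(pairs with `x` before `y` in `π` and `y` before `x` in `σ`) of `π⁻¹ y - π⁻¹ x` equals
`(1/2) ‖v_π - v_σ‖²`. -/
theorem sum_identity (n : ℕ) (π σ : Equiv.Perm (Fin n)) :
    ∑ p ∈ Finset.univ.filter (fun p : Fin n × Fin n =>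
        π.symm p.1 < π.symm p.2 ∧ σ.symm p.2 < σ.symm p.1),
      (((π.symm p.2).1 : ℝ) - ((π.symm p.1).1 : ℝ))
      = (1 / 2) * ‖posVec π - posVec σ‖ ^ 2 := by
  set a : Fin n → ℝ := fun i => ((π.symm i).1 : ℝ) with ha
  set b : Fin n → ℝ := fun i => ((σ.symm i).1 : ℝ) with hb
  -- counts
  set R : Fin n → ℕ := fun i =>
    (univ.filter (fun j => π.symm j < π.symm i ∧ σ.symm i < σ.symm j)).card with hR
  set L : Fin n → ℕ := fun i =>
    (univ.filter (fun j => π.symm i < π.symm j ∧ σ.symm j < σ.symm i)).card with hL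
  set C : Fin n → ℕ := fun i =>
    (univ.filter (fun j => π.symm j < π.symm i ∧ σ.symm j < σ.symm i)).card with hC
  have haR : ∀ i, a i = (C i : ℝ) + (R i : ℝ) := by
    intro i
    have := pos_split π σ i
    simp only [ha]
    exact_mod_cast congrArg (Nat.cast : ℕ → ℝ) this
  have hbL : ∀ i, b i = (C i : ℝ) + (L i : ℝ) := by
    intro i
    have h := pos_split σ π i
    have e1 : (univ.filter (fun j => σ.symm j < σ.symm i ∧ π.symm j < π.symm i))
        = univ.filter (fun j => π.symm j < π.symm i ∧ σ.symm j < σ.symm i) := by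
      ext j; simp [and_comm]
    have e2 : (univ.filter (fun j => σ.symm j < σ.symm i ∧ π.symm i < π.symm j))
        = univ.filter (fun j => π.symm i < π.symm j ∧ σ.symm j < σ.symm i) := by
      ext j; simp [and_comm]
    rw [e1, e2] at h
    simp only [hb]
    exact_mod_cast congrArg (Nat.cast : ℕ → ℝ) h
  -- LHS rewrite
  have hmain : ∑ p ∈ Finset.univ.filter (fun p : Fin n × Fin n =>
        π.symm p.1 < π.symm p.2 ∧ σ.symm p.2 < σ.symm p.1),
      (((π.symm p.2).1 : ℝ) - ((π.symm p.1).1 : ℝ))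
      = ∑ i, a i * (a i - b i) := by
    have step1 : ∑ p ∈ Finset.univ.filter (fun p : Fin n × Fin n =>
          π.symm p.1 < π.symm p.2 ∧ σ.symm p.2 < σ.symm p.1),
        (((π.symm p.2).1 : ℝ) - ((π.symm p.1).1 : ℝ))
        = ∑ x, ∑ y, (if (π.symm x < π.symm y ∧ σ.symm y < σ.symm x)
            then (a y - a x) else 0) := by
      rw [Finset.sum_filter, Fintype.sum_prod_type]
    rw [step1]
    have step2 : ∀ x y : Fin n, (if (π.symm x < π.symm y ∧ σ.symm y < σ.symm x)
            then (a y - a x) else 0)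
        = (if (π.symm x < π.symm y ∧ σ.symm y < σ.symm x) then a y else 0)
          - (if (π.symm x < π.symm y ∧ σ.symm y < σ.symm x) then a x else 0) := by
      intro x y; split <;> simp
    simp only [step2, Finset.sum_sub_distrib]
    have T1 : ∑ x, ∑ y, (if (π.symm x < π.symm y ∧ σ.symm y < σ.symm x) then a y else 0)
        = ∑ y, (R y : ℝ) * a y := by
      rw [Finset.sum_comm]
      refine Finset.sum_congr rfl fun y _ => ?_
      rw [← Finset.sum_filter, Finset.sum_const, nsmul_eq_mul]
    have T2 : ∑ x, ∑ y, (if (π.symm x < π.symm y ∧ σ.symm y < σ.symm x) then a x else 0)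
        = ∑ x, (L x : ℝ) * a x := by
      refine Finset.sum_congr rfl fun x _ => ?_
      rw [← Finset.sum_filter, Finset.sum_const, nsmul_eq_mul]
    rw [T1, T2, ← Finset.sum_sub_distrib]
    refine Finset.sum_congr rfl fun i _ => ?_
    have h1 := haR i
    have h2 := hbL i
    have : (R i : ℝ) - (L i : ℝ) = a i - b i := by rw [h1, h2]; ring
    nlinarith [this]
  rw [hmain]
  -- norm side
  have hnorm : ‖posVec π - posVec σ‖ ^ 2 = ∑ i, (a i - b i) ^ 2 := by
    rw [EuclideanSpace.norm_eq, Real.sq_sqrt (by positivity)]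
    refine Finset.sum_congr rfl fun i _ => ?_
    simp [posVec, ha, hb, sq_abs]
  rw [hnorm]
  have hsq : ∑ i, a i ^ 2 = ∑ i, b i ^ 2 := by
    simp only [ha, hb]
    rw [Equiv.sum_comp π.symm (fun k : Fin n => ((k : ℕ) : ℝ) ^ 2),
      Equiv.sum_comp σ.symm (fun k : Fin n => ((k : ℕ) : ℝ) ^ 2)]
  have h2 : ∑ i, (2 * (a i * (a i - b i))) = ∑ i, ((a i - b i) ^ 2 + (a i ^ 2 - b i ^ 2)) := by
    refine Finset.sum_congr rfl fun i _ => by ring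
  rw [Finset.sum_add_distrib, Finset.sum_sub_distrib, hsq, sub_self, add_zero,
    ← Finset.mul_sum] at h2
  linarith

end Mallows
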